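/- For every positive integer k there exists a positive constant δ_k, depending only on k, such that: for every polynomial P(x) with real coefficients, of degree at most k, satisfying P(0) = 1 and P'(0) = -1, there exists x ∈ [0, δ_k] such that either P(x) ≤ -1 or P'(x) ≥ 1. -/

import Mathlib

open Polynomial Set

lemma MC.poly_mono {p : Polynomial ℝ} {a b : ℝ} (hab : a ≤ b)
    (h : ∀ t ∈ Set.Icc a b, 0 ≤ p.derivative.eval t) : p.eval a ≤ p.eval b := by
  have hm : MonotoneOn (fun x => p.eval x) (Set.Icc a b) := by
    apply monotoneOn_of_deriv_nonneg (convex_Icc a b)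
    · exact (Polynomial.continuous p).continuousOn
    · exact (Polynomial.differentiable p).differentiableOn
    · intro x hx
      rw [Polynomial.deriv]
      exact h x (interior_subset hx)
  exact hm (Set.left_mem_Icc.mpr hab) (Set.right_mem_Icc.mpr hab) hab

lemma MC.derivative_finset_prod {ι : Type*} [DecidableEq ι] (s : Finset ι) (f : ι → Polynomial ℝ) :
    Polynomial.derivative (∏ i ∈ s, f i)
      = ∑ i ∈ s, (∏ j ∈ s.erase i, f j) * Polynomial.derivative (f i) := by
  induction s using Finset.induction with
  | empty => simp
  | @insert a s ha ih =>
    rw [Finset.prod_insert ha, derivative_mul, ih, Finset.sum_insert ha, Finset.erase_insert ha,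
      Finset.mul_sum]
    rw [mul_comm (derivative (f a)) (∏ i ∈ s, f i)]
    congr 1
    apply Finset.sum_congr rfl
    intro i hi
    have hai : a ∉ s.erase i := fun hc => ha (Finset.mem_of_mem_erase hc)
    rw [Finset.erase_insert_of_ne (by rintro rfl; exact ha hi), Finset.prod_insert hai, mul_assoc]

lemma MC.deriv_bound (k : ℕ) (hk : 0 < k) (δ : ℝ) (hδ : 0 < δ) (g : Polynomial ℝ)
    (hdeg : g.degree < ((k+1 : ℕ) : WithBot ℕ))
    (M : ℝ) (hM : ∀ t ∈ Set.Icc (0:ℝ) δ, |g.eval t| ≤ M)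
    {x : ℝ} (hx : x ∈ Set.Icc (0:ℝ) δ) :
    |g.derivative.eval x| ≤ ((k:ℝ)+1) * (k:ℝ)^(k+1) * M / δ := by
  have hk1 : (1:ℝ) ≤ (k:ℝ) := by exact_mod_cast hk
  have hδk : 0 < δ / k := by positivity
  set s : Finset ℕ := Finset.range (k+1) with hs
  set v : ℕ → ℝ := fun i => i * δ / k with hv
  have hM0 : 0 ≤ M := le_trans (abs_nonneg _) (hM 0 (Set.left_mem_Icc.mpr hδ.le))
  have hvdiff : ∀ i j : ℕ, i ≠ j → δ / k ≤ |v i - v j| := by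
    intro i j hij
    have h1 : (1:ℝ) ≤ |(i:ℝ) - (j:ℝ)| := by
      have h0 : ((i:ℤ) - (j:ℤ)) ≠ 0 := by intro h; apply hij; omega
      have h2 := Int.one_le_abs h0
      calc (1:ℝ) ≤ |((i:ℤ) - (j:ℤ) : ℤ)| := by exact_mod_cast h2
        _ = |(i:ℝ) - (j:ℝ)| := by push_cast; rfl
    have h3 : v i - v j = ((i:ℝ) - (j:ℝ)) * (δ / k) := by
      simp only [hv]; field_simp
    rw [h3, abs_mul, abs_of_pos hδk]
    nlinarith [abs_nonneg ((i:ℝ) - (j:ℝ))]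
  have hinj : Set.InjOn v s := by
    intro i _ j _ hij
    by_contra hne
    have := hvdiff i j hne
    rw [hij, sub_self, abs_zero] at this
    linarith
  have hvmem : ∀ i ∈ s, v i ∈ Set.Icc (0:ℝ) δ := by
    intro i hi
    have hik : (i:ℝ) ≤ (k:ℝ) := by
      have : i ≤ k := by simpa [hs] using Finset.mem_range_succ_iff.mp hi
      exact_mod_cast this
    constructor
    · positivity
    · rw [hv]; simp only
      rw [div_le_iff₀ (by positivity)]
      nlinarith
  have hcard : s.card = k + 1 := Finset.card_range (k+1)
  have hg : Lagrange.interpolate s v (fun i => g.eval (v i)) = g :=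
    (Lagrange.eq_interpolate (f := g) hinj (by rw [hcard]; exact hdeg)).symm
  have hgd : g.derivative = ∑ i ∈ s, Polynomial.C (g.eval (v i)) *
      Polynomial.derivative (Lagrange.basis s v i) := by
    conv_lhs => rw [← hg]
    rw [Lagrange.interpolate_apply, derivative_sum]
    exact Finset.sum_congr rfl fun i _ => by rw [derivative_C_mul]
  have hbasis : ∀ i ∈ s, |Polynomial.eval x (Polynomial.derivative (Lagrange.basis s v i))|
      ≤ (k:ℝ)^(k+1) / δ := by
    intro i hi
    rw [Lagrange.basis, MC.derivative_finset_prod, eval_finset_sum]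
    have hterm : ∀ j ∈ s.erase i,
        |Polynomial.eval x ((∏ l ∈ (s.erase i).erase j, Lagrange.basisDivisor (v i) (v l)) *
          Polynomial.derivative (Lagrange.basisDivisor (v i) (v j)))|
        ≤ (k:ℝ)^(k-1) * ((k:ℝ)/δ) := by
      intro j hj
      have hdb : Polynomial.derivative (Lagrange.basisDivisor (v i) (v j))
          = Polynomial.C ((v i - v j)⁻¹) := by
        rw [Lagrange.basisDivisor, derivative_C_mul]
        simp
      rw [hdb, eval_mul, eval_C, eval_prod, abs_mul]
      have hij : i ≠ j := (Finset.mem_erase.mp hj).1.symm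
      have hvij := hvdiff i j hij
      have hinvj : |(v i - v j)⁻¹| ≤ (k:ℝ)/δ := by
        rw [abs_inv]
        calc |v i - v j|⁻¹ ≤ (δ/(k:ℝ))⁻¹ := inv_anti₀ hδk hvij
          _ = (k:ℝ)/δ := by rw [inv_div]
      have hprod : |∏ l ∈ (s.erase i).erase j,
          Polynomial.eval x (Lagrange.basisDivisor (v i) (v l))| ≤ (k:ℝ)^(k-1) := by
        rw [Finset.abs_prod]
        have hcard2 : ((s.erase i).erase j).card = k - 1 := by
          rw [Finset.card_erase_of_mem hj, Finset.card_erase_of_mem hi, hcard]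
          omega
        have hstep : ∏ l ∈ (s.erase i).erase j,
            |Polynomial.eval x (Lagrange.basisDivisor (v i) (v l))|
            ≤ ∏ _l ∈ (s.erase i).erase j, (k:ℝ) := by
          apply Finset.prod_le_prod (fun _ _ => abs_nonneg _)
          intro l hl
          have hil : i ≠ l := ((Finset.mem_erase.mp (Finset.mem_of_mem_erase hl)).1).symm
          have hls : l ∈ s := Finset.mem_of_mem_erase (Finset.mem_of_mem_erase hl)
          have h1 := hvmem l hls
          have hxvl : |x - v l| ≤ δ := by
            rw [abs_le]
            constructor
            · have := hx.1; have := h1.2; linarith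
            · have := hx.2; have := h1.1; linarith
          have heval : Polynomial.eval x (Lagrange.basisDivisor (v i) (v l))
              = (v i - v l)⁻¹ * (x - v l) := by
            rw [Lagrange.basisDivisor]; simp
          rw [heval, abs_mul]
          have hinvl : |(v i - v l)⁻¹| ≤ (k:ℝ)/δ := by
            rw [abs_inv]
            calc |v i - v l|⁻¹ ≤ (δ/(k:ℝ))⁻¹ := inv_anti₀ hδk (hvdiff i l hil)
              _ = (k:ℝ)/δ := by rw [inv_div]
          calc |(v i - v l)⁻¹| * |x - v l| ≤ ((k:ℝ)/δ) * δ :=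
                mul_le_mul hinvl hxvl (abs_nonneg _) (by positivity)
            _ = (k:ℝ) := by field_simp
        refine hstep.trans (le_of_eq ?_)
        rw [Finset.prod_const, hcard2]
      exact mul_le_mul hprod hinvj (abs_nonneg _) (by positivity)
    have h2 : |∑ j ∈ s.erase i, Polynomial.eval x
        ((∏ l ∈ (s.erase i).erase j, Lagrange.basisDivisor (v i) (v l)) *
          Polynomial.derivative (Lagrange.basisDivisor (v i) (v j)))|
        ≤ ∑ _j ∈ s.erase i, (k:ℝ)^(k-1) * ((k:ℝ)/δ) :=
      le_trans (Finset.abs_sum_le_sum_abs _ _) (Finset.sum_le_sum hterm)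
    refine h2.trans (le_of_eq ?_)
    rw [Finset.sum_const, Finset.card_erase_of_mem hi, hcard]
    have hpow : (k:ℝ) * (k:ℝ)^(k-1) = (k:ℝ)^k := by
      rw [← pow_succ']
      congr 1
      omega
    simp only [nsmul_eq_mul]
    push_cast
    rw [show (k:ℝ) * ((k:ℝ)^(k-1) * ((k:ℝ)/δ)) = ((k:ℝ) * (k:ℝ)^(k-1)) * (k:ℝ)/δ by ring,
      hpow, ← pow_succ]
  rw [hgd, eval_finset_sum]
  have h1 : |∑ i ∈ s, Polynomial.eval x (Polynomial.C (g.eval (v i)) *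
      Polynomial.derivative (Lagrange.basis s v i))|
      ≤ ∑ _i ∈ s, M * ((k:ℝ)^(k+1) / δ) := by
    refine le_trans (Finset.abs_sum_le_sum_abs _ _) (Finset.sum_le_sum ?_)
    intro i hi
    rw [eval_mul, eval_C, abs_mul]
    exact mul_le_mul (hM (v i) (hvmem i hi)) (hbasis i hi) (abs_nonneg _) hM0
  refine h1.trans (le_of_eq ?_)
  rw [Finset.sum_const, hcard]
  push_cast [nsmul_eq_mul]
  ring

set_option maxHeartbeats 2000000

/-- **Magic constants, part (1).**
For every positive integer `k` there exists `δ_k > 0`, depending only on `k`, such that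
every real polynomial `P` of degree at most `k` with `P(0) = 1` and `P'(0) = -1`
satisfies `P(x) ≤ -1` or `P'(x) ≥ 1` for some `x ∈ [0, δ_k]`. -/
theorem magic_constants_part_one (k : ℕ) (hk : 0 < k) :
    ∃ δ : ℝ, 0 < δ ∧ ∀ P : Polynomial ℝ, P.natDegree ≤ k →
      P.eval 0 = 1 → P.derivative.eval 0 = -1 →
      ∃ x ∈ Set.Icc (0 : ℝ) δ, P.eval x ≤ -1 ∨ 1 ≤ P.derivative.eval x := by
  have hk1 : (1:ℝ) ≤ (k:ℝ) := by exact_mod_cast hk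
  obtain ⟨C, hCdef⟩ : ∃ C : ℝ, C = ((k:ℝ)+1) * (k:ℝ)^(k+1) := ⟨_, rfl⟩
  have hpk : (1:ℝ) ≤ (k:ℝ)^(k+1) := one_le_pow₀ hk1
  have hC1 : 1 ≤ C := by rw [hCdef]; nlinarith
  have hC0 : 0 < C := lt_of_lt_of_le one_pos hC1
  refine ⟨40 * C^2, by nlinarith, ?_⟩
  intro P hdegP hP0 hP'0
  by_contra hcon
  push_neg at hcon
  obtain ⟨δ, hδdef⟩ : ∃ δ : ℝ, δ = 40 * C^2 := ⟨_, rfl⟩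
  rw [← hδdef] at hcon
  have hδ : 0 < δ := by rw [hδdef]; nlinarith
  have hδ40 : (40:ℝ) ≤ δ := by rw [hδdef]; nlinarith
  obtain ⟨g, hgdef⟩ : ∃ g : Polynomial ℝ, g = 1 - P.derivative := ⟨_, rfl⟩
  have hgeval : ∀ t : ℝ, g.eval t = 1 - P.derivative.eval t := by
    intro t; simp [hgdef]
  have hg0 : g.eval 0 = 2 := by rw [hgeval, hP'0]; norm_num
  have hgpos : ∀ t ∈ Set.Icc (0:ℝ) δ, 0 < g.eval t := by
    intro t ht
    have := (hcon t ht).2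
    rw [hgeval]; linarith
  have hdeg : g.degree < ((k+1:ℕ) : WithBot ℕ) := by
    have hnat : g.natDegree ≤ k := by
      rw [hgdef]
      refine le_trans (Polynomial.natDegree_sub_le _ _) ?_
      simp only [Polynomial.natDegree_one, max_le_iff]
      refine ⟨Nat.zero_le _, le_trans (Polynomial.natDegree_derivative_le P) ?_⟩
      omega
    refine lt_of_le_of_lt Polynomial.degree_le_natDegree ?_
    exact_mod_cast Nat.lt_succ_of_le hnat
  obtain ⟨Gp, hGdef⟩ : ∃ Gp : Polynomial ℝ, Gp = Polynomial.X + 1 - P := ⟨_, rfl⟩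
  have hG' : Gp.derivative = g := by
    rw [hGdef, hgdef]
    simp
  have hGeval : ∀ t : ℝ, Gp.eval t = t + 1 - P.eval t := by intro t; simp [hGdef]
  have hG0 : Gp.eval 0 = 0 := by rw [hGeval, hP0]; ring
  have hGub : ∀ t ∈ Set.Icc (0:ℝ) δ, Gp.eval t < t + 2 := by
    intro t ht
    have := (hcon t ht).1
    rw [hGeval]; linarith
  have hGmono : ∀ a b : ℝ, a ∈ Set.Icc (0:ℝ) δ → b ∈ Set.Icc (0:ℝ) δ → a ≤ b →
      Gp.eval a ≤ Gp.eval b := by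
    intro a b ha hb hab
    apply MC.poly_mono hab
    intro t ht
    rw [hG']
    exact (hgpos t ⟨le_trans ha.1 ht.1, le_trans ht.2 hb.2⟩).le
  obtain ⟨xs, hxs, hmax⟩ := isCompact_Icc.exists_isMaxOn (Set.nonempty_Icc.mpr hδ.le)
      ((Polynomial.continuous g).continuousOn : ContinuousOn (fun t => g.eval t) (Set.Icc 0 δ))
  obtain ⟨M, hMdef⟩ : ∃ M : ℝ, M = g.eval xs := ⟨_, rfl⟩
  have hM2 : 2 ≤ M := by
    have := hmax (Set.left_mem_Icc.mpr hδ.le)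
    rw [hMdef, ← hg0]
    exact this
  have hM0 : 0 < M := by linarith
  have hMabs : ∀ t ∈ Set.Icc (0:ℝ) δ, |g.eval t| ≤ M := by
    intro t ht
    rw [abs_of_pos (hgpos t ht), hMdef]
    exact hmax ht
  have hder : ∀ x ∈ Set.Icc (0:ℝ) δ, |g.derivative.eval x| ≤ C * M / δ := by
    intro x hx
    have := MC.deriv_bound k hk δ hδ g hdeg M hMabs hx
    calc |g.derivative.eval x| ≤ ((k:ℝ)+1) * (k:ℝ)^(k+1) * M / δ := this
      _ = C * M / δ := by rw [hCdef]
  have key : ∀ a b : ℝ, a ∈ Set.Icc (0:ℝ) δ → b ∈ Set.Icc (0:ℝ) δ → a ≤ b →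
      g.eval a - (C*M/δ)*(b-a) ≤ g.eval b := by
    intro a b ha hb hab
    have hmono := MC.poly_mono (p := g + Polynomial.C (C*M/δ) * Polynomial.X) hab ?_
    · simp only [Polynomial.eval_add, Polynomial.eval_mul, Polynomial.eval_C,
        Polynomial.eval_X] at hmono
      linarith
    · intro t ht
      have ht' : t ∈ Set.Icc (0:ℝ) δ := ⟨le_trans ha.1 ht.1, le_trans ht.2 hb.2⟩
      have h1 := (abs_le.mp (hder t ht')).1
      simp only [Polynomial.derivative_add, Polynomial.derivative_C_mul,
        Polynomial.derivative_X, mul_one, Polynomial.eval_add, Polynomial.eval_C]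
      linarith
  have key2 : ∀ a b : ℝ, a ∈ Set.Icc (0:ℝ) δ → b ∈ Set.Icc (0:ℝ) δ → a ≤ b →
      g.eval b ≤ g.eval a + (C*M/δ)*(b-a) := by
    intro a b ha hb hab
    have hmono := MC.poly_mono (p := Polynomial.C (C*M/δ) * Polynomial.X - g) hab ?_
    · simp only [Polynomial.eval_sub, Polynomial.eval_mul, Polynomial.eval_C,
        Polynomial.eval_X] at hmono
      linarith
    · intro t ht
      have ht' : t ∈ Set.Icc (0:ℝ) δ := ⟨le_trans ha.1 ht.1, le_trans ht.2 hb.2⟩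
      have h1 := (abs_le.mp (hder t ht')).2
      simp only [Polynomial.derivative_sub, Polynomial.derivative_C_mul,
        Polynomial.derivative_X, mul_one, Polynomial.eval_sub, Polynomial.eval_C]
      linarith
  -- bound on the maximum M
  have hMle : M ≤ 8*C := by
    obtain ⟨L, hLdef⟩ : ∃ L : ℝ, L = δ/(2*C) := ⟨_, rfl⟩
    have hL0 : 0 < L := hLdef ▸ div_pos hδ (by linarith : (0:ℝ) < 2*C)
    have hLeq : L * (2*C) = δ := by
      rw [hLdef]; field_simp
    have hL2 : L ≤ δ/2 := by nlinarith
    have hCLhalf : (C*M/δ)*L = M/2 := by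
      rw [hLdef]; field_simp
    by_cases hcase : xs ≤ δ/2
    · have hsub : xs + L ≤ δ := by linarith
      have hmemb : xs + L ∈ Set.Icc (0:ℝ) δ := ⟨by linarith [hxs.1], hsub⟩
      have hpt : ∀ t ∈ Set.Icc xs (xs+L), M/2 ≤ g.eval t := by
        intro t ht
        have ht' : t ∈ Set.Icc (0:ℝ) δ := ⟨le_trans hxs.1 ht.1, le_trans ht.2 hsub⟩
        have h1 := key xs t hxs ht' ht.1
        have h2 : (C*M/δ)*(t - xs) ≤ M/2 := by
          rw [← hCLhalf]
          have : 0 ≤ C*M/δ := div_nonneg (mul_nonneg hC0.le hM0.le) hδ.le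
          nlinarith [ht.1, ht.2]
        linarith
      have hint : (M/2)*L ≤ Gp.eval (xs+L) - Gp.eval xs := by
        have hmono := MC.poly_mono (p := Gp - Polynomial.C (M/2) * Polynomial.X)
          (show xs ≤ xs + L by linarith) ?_
        · simp only [Polynomial.eval_sub, Polynomial.eval_mul, Polynomial.eval_C,
            Polynomial.eval_X] at hmono
          linarith
        · intro t ht
          simp only [Polynomial.derivative_sub, Polynomial.derivative_C_mul,
            Polynomial.derivative_X, mul_one, Polynomial.eval_sub, Polynomial.eval_C, hG']
          linarith [hpt t ht]
      have h4 : Gp.eval (xs+L) < δ + 2 :=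
        lt_of_lt_of_le (hGub _ hmemb) (by linarith [hmemb.2])
      have h5 : 0 ≤ Gp.eval xs := by
        rw [← hG0]
        exact hGmono 0 xs (Set.left_mem_Icc.mpr hδ.le) hxs hxs.1
      have h6 : (M/2)*L ≤ 2*δ := by linarith
      rw [hLdef] at h6
      have h7 : (M/2)*(δ/(2*C)) = M*δ/(4*C) := by field_simp; ring
      rw [h7] at h6
      rw [div_le_iff₀ (by linarith : (0:ℝ) < 4*C)] at h6
      nlinarith
    · push_neg at hcase
      have hsub : 0 ≤ xs - L := by linarith
      have hmemb : xs - L ∈ Set.Icc (0:ℝ) δ := ⟨hsub, by linarith [hxs.2]⟩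
      have hpt : ∀ t ∈ Set.Icc (xs-L) xs, M/2 ≤ g.eval t := by
        intro t ht
        have ht' : t ∈ Set.Icc (0:ℝ) δ := ⟨le_trans hsub ht.1, le_trans ht.2 hxs.2⟩
        have h1 := key2 t xs ht' hxs ht.2
        have h2 : (C*M/δ)*(xs - t) ≤ M/2 := by
          rw [← hCLhalf]
          have : 0 ≤ C*M/δ := div_nonneg (mul_nonneg hC0.le hM0.le) hδ.le
          nlinarith [ht.1, ht.2]
        linarith
      have hint : (M/2)*L ≤ Gp.eval xs - Gp.eval (xs-L) := by
        have hmono := MC.poly_mono (p := Gp - Polynomial.C (M/2) * Polynomial.X)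
          (show xs - L ≤ xs by linarith) ?_
        · simp only [Polynomial.eval_sub, Polynomial.eval_mul, Polynomial.eval_C,
            Polynomial.eval_X] at hmono
          linarith
        · intro t ht
          simp only [Polynomial.derivative_sub, Polynomial.derivative_C_mul,
            Polynomial.derivative_X, mul_one, Polynomial.eval_sub, Polynomial.eval_C, hG']
          linarith [hpt t ht]
      have h4 : Gp.eval xs < δ + 2 :=
        lt_of_lt_of_le (hGub _ hxs) (by linarith [hxs.2])
      have h5 : 0 ≤ Gp.eval (xs-L) := by
        rw [← hG0]
        exact hGmono 0 (xs-L) (Set.left_mem_Icc.mpr hδ.le) hmemb hsub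
      have h6 : (M/2)*L ≤ 2*δ := by linarith
      rw [hLdef] at h6
      have h7 : (M/2)*(δ/(2*C)) = M*δ/(4*C) := by field_simp; ring
      rw [h7] at h6
      rw [div_le_iff₀ (by linarith : (0:ℝ) < 4*C)] at h6
      nlinarith
  -- final contradiction at x = 5
  have hx5 : (5:ℝ) ∈ Set.Icc (0:ℝ) δ := ⟨by norm_num, by linarith⟩
  have hCM : C*M/δ ≤ 1/5 := by
    rw [div_le_iff₀ hδ]
    nlinarith
  have hpt0 : ∀ t ∈ Set.Icc (0:ℝ) 5, 2 - t/5 ≤ g.eval t := by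
    intro t ht
    have ht' : t ∈ Set.Icc (0:ℝ) δ := ⟨ht.1, le_trans ht.2 (by linarith)⟩
    have h1 := key 0 t (Set.left_mem_Icc.mpr hδ.le) ht' ht.1
    rw [hg0] at h1
    have h2 : (C*M/δ)*t ≤ t/5 := by
      have : 0 ≤ t := ht.1
      nlinarith
    have h3 : (C*M/δ)*(t-0) = (C*M/δ)*t := by ring
    rw [h3] at h1
    linarith
  have hfinal : (15:ℝ)/2 ≤ Gp.eval 5 := by
    have hmono := MC.poly_mono
      (p := Gp - (Polynomial.C 2 * Polynomial.X - Polynomial.C (1/10) * Polynomial.X^2))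
      (show (0:ℝ) ≤ 5 by norm_num) ?_
    · simp only [Polynomial.eval_sub, Polynomial.eval_mul, Polynomial.eval_C,
        Polynomial.eval_X, Polynomial.eval_pow] at hmono
      rw [hG0] at hmono
      norm_num at hmono
      linarith
    · intro t ht
      rw [Polynomial.derivative_sub, hG']
      simp only [Polynomial.derivative_sub, Polynomial.derivative_C_mul,
        Polynomial.derivative_X, Polynomial.derivative_X_pow, Polynomial.eval_sub,
        Polynomial.eval_mul, Polynomial.eval_C, Polynomial.eval_X, Polynomial.eval_pow,
        mul_one, pow_one, Nat.cast_ofNat]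
      have := hpt0 t ht
      nlinarith [this]
  have := hGub 5 hx5
  linarith
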